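/- Let U_1, …, U_m be nonempty closed convex subsets of R^n whose intersection U satisfies the local error bound condition at the limit point x̄ of the 3PM sequence (x_k): there exist ω ∈ (0,1) and a neighborhood V of x̄ such that ω·dist(x, U) ≤ max_{1≤i≤m} dist(x, U_i) for all x ∈ V. Then (x_k) converges linearly to x̄ with rate at most sqrt(1 − ω²/4). -/

import Mathlib

open Metric Filter Topology

/-- `p` is the metric projection of `z` onto `X`. -/
def IsProj {n : ℕ} (X : Set (EuclideanSpace ℝ (Fin n))) (z p : EuclideanSpace ℝ (Fin n)) : Prop :=
  p ∈ X ∧ ∀ y ∈ X, dist z p ≤ dist z y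

/-- From `IsProj` to the variational inequality. -/
lemma isProj_inner_le {n : ℕ} {X : Set (EuclideanSpace ℝ (Fin n))} (hX : Convex ℝ X)
    {z q : EuclideanSpace ℝ (Fin n)} (h : IsProj X z q) :
    ∀ w ∈ X, inner ℝ (z - q) (w - q) ≤ (0 : ℝ) := by
  haveI : Nonempty X := ⟨⟨q, h.1⟩⟩
  have hbdd : BddBelow (Set.range fun w : X => ‖z - (w : EuclideanSpace ℝ (Fin n))‖) :=
    ⟨0, fun _ ⟨_, hh⟩ => hh ▸ norm_nonneg _⟩
  have h1 : (⨅ w : X, ‖z - (w : EuclideanSpace ℝ (Fin n))‖) ≤ ‖z - q‖ :=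
    ciInf_le hbdd ⟨q, h.1⟩
  have h2 : ‖z - q‖ ≤ ⨅ w : X, ‖z - (w : EuclideanSpace ℝ (Fin n))‖ := by
    apply le_ciInf
    intro w
    simpa [dist_eq_norm] using h.2 w w.2
  exact (norm_eq_iInf_iff_real_inner_le_zero hX h.1).1 (le_antisymm h2 h1)

lemma halfspace_convex {n : ℕ} (v q : EuclideanSpace ℝ (Fin n)) :
    Convex ℝ {z : EuclideanSpace ℝ (Fin n) | inner ℝ v (z - q) ≤ (0 : ℝ)} := by
  have : {z : EuclideanSpace ℝ (Fin n) | inner ℝ v (z - q) ≤ (0 : ℝ)} =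
      {z : EuclideanSpace ℝ (Fin n) | inner ℝ v z ≤ (inner ℝ v q : ℝ)} := by
    ext z; simp [inner_sub_right, sub_nonpos]
  rw [this]
  exact convex_halfSpace_le ⟨fun a b => inner_add_right v a b,
    fun c y => real_inner_smul_right v y c⟩ _

lemma norm_sub_sq_three {n : ℕ} (a b c : EuclideanSpace ℝ (Fin n)) :
    ‖a - c‖ ^ 2 = ‖a - b‖ ^ 2 + 2 * inner ℝ (a - b) (b - c) + ‖b - c‖ ^ 2 := by
  have h := norm_add_sq_real (a - b) (b - c)
  rw [show a - b + (b - c) = a - c by abel] at h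
  linarith

/-- Linear convergence of 3PM under the local error bound condition. -/
theorem stmt7 {n m : ℕ} (hm : 0 < m) (U : Fin m → Set (EuclideanSpace ℝ (Fin n)))
    (hne : ∀ i, (U i).Nonempty) (hcl : ∀ i, IsClosed (U i)) (hcv : ∀ i, Convex ℝ (U i))
    (hU : (⋂ i, U i).Nonempty)
    (x : ℕ → EuclideanSpace ℝ (Fin n)) (p : ℕ → Fin m → EuclideanSpace ℝ (Fin n))
    (hp : ∀ k i, IsProj (U i) (x k) (p k i))
    (hstep : ∀ k, IsProj
      (⋂ i, {z : EuclideanSpace ℝ (Fin n) | inner ℝ (x k - p k i) (z - p k i) ≤ (0 : ℝ)})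
      (x k) (x (k + 1)))
    (xbar : EuclideanSpace ℝ (Fin n)) (hlim : Tendsto x atTop (nhds xbar))
    (ω : ℝ) (hω : ω ∈ Set.Ioo (0 : ℝ) 1)
    (V : Set (EuclideanSpace ℝ (Fin n))) (hV : V ∈ nhds xbar)
    (hEB : ∀ y ∈ V, ω * Metric.infDist y (⋂ i, U i) ≤ ⨆ i : Fin m, Metric.infDist y (U i)) :
    ∃ N : ℕ, ∀ k ≥ N,
      ‖x (k + 1) - xbar‖ ≤ Real.sqrt (1 - ω ^ 2 / 4) * ‖x k - xbar‖ := by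
  haveI : Nonempty (Fin m) := ⟨⟨0, hm⟩⟩
  set S : Set (EuclideanSpace ℝ (Fin n)) := ⋂ i, U i with hSdef
  set Ω : ℕ → Set (EuclideanSpace ℝ (Fin n)) := fun k =>
    ⋂ i, {z : EuclideanSpace ℝ (Fin n) | inner ℝ (x k - p k i) (z - p k i) ≤ (0 : ℝ)} with hΩdef
  have hΩconv : ∀ k, Convex ℝ (Ω k) := fun k =>
    convex_iInter fun i => halfspace_convex _ _
  -- U ⊆ Ω k
  have hUsub : ∀ k, S ⊆ Ω k := by
    intro k u hu
    refine Set.mem_iInter.2 fun i => ?_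
    exact isProj_inner_le (hcv i) (hp k i) u (Set.mem_iInter.1 hu i)
  -- variational inequality for the step
  have hvar : ∀ k, ∀ u ∈ S, inner ℝ (x k - x (k + 1)) (u - x (k + 1)) ≤ (0 : ℝ) :=
    fun k u hu => isProj_inner_le (hΩconv k) (hstep k) u (hUsub k hu)
  -- Fejér inequality
  have hFej : ∀ k, ∀ u ∈ S,
      ‖x (k + 1) - u‖ ^ 2 ≤ ‖x k - u‖ ^ 2 - ‖x k - x (k + 1)‖ ^ 2 := by
    intro k u hu
    have h := norm_sub_sq_three (x k) (x (k + 1)) u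
    have h2 : inner ℝ (x k - x (k + 1)) (x (k + 1) - u) ≥ (0 : ℝ) := by
      have := hvar k u hu
      have e : x (k + 1) - u = -(u - x (k + 1)) := by abel
      rw [e, inner_neg_right]; linarith
    linarith
  -- step length dominates infDist to each U i
  have hbig : ∀ k i, Metric.infDist (x k) (U i) ≤ ‖x k - x (k + 1)‖ := by
    intro k i
    have h1 : Metric.infDist (x k) (U i) ≤ dist (x k) (p k i) :=
      Metric.infDist_le_dist_of_mem (hp k i).1
    have hxk1 : inner ℝ (x k - p k i) (x (k + 1) - p k i) ≤ (0 : ℝ) :=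
      Set.mem_iInter.1 (hstep k).1 i
    have h := norm_sub_sq_three (x k) (p k i) (x (k + 1))
    have e : p k i - x (k + 1) = -(x (k + 1) - p k i) := by abel
    rw [e, inner_neg_right] at h
    have h2 : ‖x k - p k i‖ ^ 2 ≤ ‖x k - x (k + 1)‖ ^ 2 := by
      nlinarith [sq_nonneg ‖p k i - x (k+1)‖]
    calc Metric.infDist (x k) (U i) ≤ ‖x k - p k i‖ := by rwa [dist_eq_norm] at h1
      _ ≤ ‖x k - x (k + 1)‖ := by
        nlinarith [norm_nonneg (x k - p k i), norm_nonneg (x k - x (k+1))]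
  -- xbar ∈ S
  have hxbarU : xbar ∈ S := by
    refine Set.mem_iInter.2 fun i => ?_
    rw [← (hcl i).closure_eq, Metric.mem_closure_iff_infDist_zero (hne i)]
    have hc : Tendsto (fun k => Metric.infDist (x k) (U i)) atTop
        (nhds (Metric.infDist xbar (U i))) :=
      ((continuous_infDist_pt (U i)).continuousAt).tendsto.comp hlim
    have hz : Tendsto (fun k => ‖x k - x (k + 1)‖) atTop (nhds 0) := by
      have : Tendsto (fun k => x k - x (k + 1)) atTop (nhds (xbar - xbar)) :=
        hlim.sub (hlim.comp (tendsto_add_atTop_nat 1))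
      simpa using this.norm
    have hle : Metric.infDist xbar (U i) ≤ 0 :=
      le_of_tendsto_of_tendsto hc hz (Eventually.of_forall fun k => hbig k i)
    exact le_antisymm hle (Metric.infDist_nonneg)
  -- Fejér monotonicity and the key bound ‖x k - xbar‖ ≤ 2 * infDist (x k) S
  have hmono : ∀ u ∈ S, ∀ k, ‖x (k + 1) - u‖ ≤ ‖x k - u‖ := by
    intro u hu k
    have := hFej k u hu
    nlinarith [norm_nonneg (x (k+1) - u), norm_nonneg (x k - u), sq_nonneg ‖x k - x (k+1)‖]
  have hmono' : ∀ u ∈ S, ∀ k j, k ≤ j → ‖x j - u‖ ≤ ‖x k - u‖ := by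
    intro u hu k j hkj
    induction j, hkj using Nat.le_induction with
    | base => exact le_refl _
    | succ j hj ih => exact le_trans (hmono u hu j) ih
  -- limit inequality
  have hlimle : ∀ u ∈ S, ∀ k, ‖xbar - u‖ ≤ ‖x k - u‖ := by
    intro u hu k
    have hc : Tendsto (fun j => ‖x j - u‖) atTop (nhds ‖xbar - u‖) :=
      (hlim.sub tendsto_const_nhds).norm
    exact le_of_tendsto hc (Filter.eventually_atTop.2 ⟨k, fun j hj => hmono' u hu k j hj⟩)
  -- key bound : ‖x k - xbar‖ ≤ 2 * infDist (x k) S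
  have hkey : ∀ k, ‖x k - xbar‖ ≤ 2 * Metric.infDist (x k) S := by
    intro k
    refine le_of_forall_pos_le_add fun ε hε => ?_
    have hlt : Metric.infDist (x k) S < Metric.infDist (x k) S + ε / 2 := by linarith
    obtain ⟨u, hu, hdu⟩ := (Metric.infDist_lt_iff hU).1 hlt
    have h1 : ‖x k - u‖ < Metric.infDist (x k) S + ε / 2 := by rwa [dist_eq_norm] at hdu
    have h2 : ‖xbar - u‖ ≤ ‖x k - u‖ := hlimle u hu k
    calc ‖x k - xbar‖ ≤ ‖x k - u‖ + ‖xbar - u‖ := by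
          have := norm_sub_le_norm_sub_add_norm_sub (x k) u xbar
          have e : ‖u - xbar‖ = ‖xbar - u‖ := norm_sub_rev _ _
          linarith [norm_sub_le_norm_sub_add_norm_sub (x k) u xbar]
      _ ≤ 2 * Metric.infDist (x k) S + ε := by linarith
  -- choose N with x k ∈ V for k ≥ N
  obtain ⟨N, hN⟩ := (Filter.eventually_atTop).1 (hlim.eventually_mem hV)
  refine ⟨N, fun k hk => ?_⟩
  have hin : x k ∈ V := hN k hk
  have hsup : (⨆ i : Fin m, Metric.infDist (x k) (U i)) ≤ ‖x k - x (k + 1)‖ :=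
    ciSup_le fun i => hbig k i
  have hEB' : ω * Metric.infDist (x k) S ≤ ‖x k - x (k + 1)‖ :=
    le_trans (hEB (x k) hin) hsup
  have hωd : ω * ‖x k - xbar‖ ≤ 2 * ‖x k - x (k + 1)‖ := by
    have := hkey k
    nlinarith [hω.1.le]
  have hF := hFej k xbar hxbarU
  have h5 : ω ^ 2 * ‖x k - xbar‖ ^ 2 ≤ 4 * ‖x k - x (k + 1)‖ ^ 2 := by
    nlinarith [hωd, mul_nonneg hω.1.le (norm_nonneg (x k - xbar)),
      norm_nonneg (x k - x (k + 1))]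
  have hsq : ‖x (k + 1) - xbar‖ ^ 2 ≤ (1 - ω ^ 2 / 4) * ‖x k - xbar‖ ^ 2 := by
    nlinarith [hF, h5]
  have h4 : (0:ℝ) ≤ 1 - ω ^ 2 / 4 := by nlinarith [hω.1, hω.2]
  calc ‖x (k + 1) - xbar‖ = Real.sqrt (‖x (k + 1) - xbar‖ ^ 2) := by
        rw [Real.sqrt_sq (norm_nonneg _)]
    _ ≤ Real.sqrt ((1 - ω ^ 2 / 4) * ‖x k - xbar‖ ^ 2) := Real.sqrt_le_sqrt hsq
    _ = Real.sqrt (1 - ω ^ 2 / 4) * ‖x k - xbar‖ := by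
        rw [Real.sqrt_mul h4, Real.sqrt_sq (norm_nonneg _)]
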